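/- Define the implicative translation τ of an implicative-disjunctive formula by replacing every disjunction B∨C with (B→C)→C (recursively: τ(p)=p, τ(A→B)=τ(A)→τ(B), τ(A∨B)=(τ(A)→τ(B))→τ(B)). Then for every implicative-disjunctive formula A, τ(A) ⊢_id A and A ⊢_id τ(A). -/

import Mathlib

inductive IDFrm where
  | atom : Nat → IDFrm
  | imp : IDFrm → IDFrm → IDFrm
  | or : IDFrm → IDFrm → IDFrm

inductive IDDeriv : Set IDFrm → IDFrm → Prop where
  | hyp {K A} : A ∈ K → IDDeriv K A
  | ax1 {K} (A B : IDFrm) : IDDeriv K (A.imp (B.imp A))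
  | ax2 {K} (A B C : IDFrm) : IDDeriv K ((A.imp (B.imp C)).imp ((A.imp B).imp (A.imp C)))
  | ax3 {K} (A B : IDFrm) : IDDeriv K (((A.imp B).imp A).imp A)
  | ax4 {K} (A B : IDFrm) : IDDeriv K (A.imp (A.or B))
  | ax5 {K} (A B : IDFrm) : IDDeriv K (A.imp (B.or A))
  | ax6 {K} (A B C : IDFrm) : IDDeriv K ((A.imp C).imp ((B.imp C).imp ((A.or B).imp C)))
  | mp {K A B} : IDDeriv K (A.imp B) → IDDeriv K A → IDDeriv K B

def IDFrm.tau : IDFrm → IDFrm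
  | .atom n => .atom n
  | .imp A B => (A.tau).imp (B.tau)
  | .or A B => ((A.tau).imp (B.tau)).imp (B.tau)

lemma IDDeriv.id_thm {K} (A : IDFrm) : IDDeriv K (A.imp A) :=
  .mp (.mp (.ax2 A (A.imp A) A) (.ax1 A (A.imp A))) (.ax1 A A)

lemma IDDeriv.weaken {K K' : Set IDFrm} {A} (hs : K ⊆ K') (h : IDDeriv K A) :
    IDDeriv K' A := by
  induction h with
  | hyp h => exact .hyp (hs h)
  | ax1 A B => exact .ax1 A B
  | ax2 A B C => exact .ax2 A B C
  | ax3 A B => exact .ax3 A B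
  | ax4 A B => exact .ax4 A B
  | ax5 A B => exact .ax5 A B
  | ax6 A B C => exact .ax6 A B C
  | mp _ _ ih1 ih2 => exact .mp ih1 ih2

lemma IDDeriv.ded' {K' : Set IDFrm} {B} (h : IDDeriv K' B) :
    ∀ A K, K' = insert A K → IDDeriv K (A.imp B) := by
  induction h with
  | hyp h =>
      rintro A K rfl
      rcases h with h | h
      · exact h ▸ .id_thm _
      · exact .mp (.ax1 _ A) (.hyp h)
  | ax1 A' B' => exact fun A K _ => .mp (.ax1 _ A) (.ax1 A' B')
  | ax2 A' B' C' => exact fun A K _ => .mp (.ax1 _ A) (.ax2 A' B' C')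
  | ax3 A' B' => exact fun A K _ => .mp (.ax1 _ A) (.ax3 A' B')
  | ax4 A' B' => exact fun A K _ => .mp (.ax1 _ A) (.ax4 A' B')
  | ax5 A' B' => exact fun A K _ => .mp (.ax1 _ A) (.ax5 A' B')
  | ax6 A' B' C' => exact fun A K _ => .mp (.ax1 _ A) (.ax6 A' B' C')
  | mp _ _ ih1 ih2 =>
      exact fun A K h => .mp (.mp (.ax2 _ _ _) (ih1 A K h)) (ih2 A K h)

lemma IDDeriv.ded {K : Set IDFrm} {A B} (h : IDDeriv (insert A K) B) :
    IDDeriv K (A.imp B) := h.ded' A K rfl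

lemma IDDeriv.cut1 {K : Set IDFrm} {A B} (h1 : IDDeriv {A} B) (h2 : IDDeriv K A) :
    IDDeriv K B := by
  have h3 : IDDeriv (insert A ∅) B := h1.weaken (by simp)
  exact .mp (h3.ded.weaken (Set.empty_subset K)) h2

theorem stmt13 (A : IDFrm) :
    IDDeriv {A.tau} A ∧ IDDeriv {A} A.tau := by
  induction A with
  | atom n => exact ⟨.hyp rfl, .hyp rfl⟩
  | imp A B ihA ihB =>
      constructor
      · -- {τA → τB} ⊢ A → B
        apply IDDeriv.ded
        have hτA : IDDeriv (insert A {(A.tau).imp (B.tau)}) A.tau :=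
          ihA.2.weaken (by intro x hx; exact Or.inl hx)
        have hτB : IDDeriv (insert A {(A.tau).imp (B.tau)}) B.tau :=
          .mp (.hyp (Or.inr rfl)) hτA
        exact ihB.1.cut1 hτB
      · -- {A → B} ⊢ τA → τB
        apply IDDeriv.ded
        have hA : IDDeriv (insert A.tau {A.imp B}) A :=
          ihA.1.cut1 (.hyp (Or.inl rfl))
        have hB : IDDeriv (insert A.tau {A.imp B}) B :=
          .mp (.hyp (Or.inr rfl)) hA
        exact ihB.2.cut1 hB
  | or A B ihA ihB =>
      constructor
      · -- {(τA→τB)→τB} ⊢ A ∨ B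
        set K : Set IDFrm := {((A.tau).imp (B.tau)).imp (B.tau)}
        -- Peirce with X = A.or B, Y = B.tau
        apply IDDeriv.mp (IDDeriv.ax3 (A.or B) B.tau)
        apply IDDeriv.ded
        -- insert ((A∨B)→τB) K ⊢ A∨B
        set K' := insert ((A.or B).imp (B.tau)) K
        have hImp : IDDeriv K' ((A.tau).imp (B.tau)) := by
          apply IDDeriv.ded
          have hA : IDDeriv (insert A.tau K') A := ihA.1.cut1 (.hyp (Or.inl rfl))
          have hOr : IDDeriv (insert A.tau K') (A.or B) := .mp (.ax4 A B) hA
          exact .mp (.hyp (Or.inr (Or.inl rfl))) hOr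
        have hτB : IDDeriv K' B.tau := .mp (.hyp (Or.inr rfl)) hImp
        have hB : IDDeriv K' B := ihB.1.cut1 hτB
        exact .mp (.ax5 B A) hB
      · -- {A ∨ B} ⊢ (τA→τB)→τB
        have h1 : IDDeriv {A.or B} (A.imp (((A.tau).imp (B.tau)).imp (B.tau))) := by
          apply IDDeriv.ded
          have hτA : IDDeriv (insert A {A.or B}) A.tau := ihA.2.cut1 (.hyp (Or.inl rfl))
          apply IDDeriv.ded
          exact .mp (.hyp (Or.inl rfl)) (hτA.weaken (Set.subset_insert _ _))
        have h2 : IDDeriv {A.or B} (B.imp (((A.tau).imp (B.tau)).imp (B.tau))) := by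
          apply IDDeriv.ded
          have hτB : IDDeriv (insert B {A.or B}) B.tau := ihB.2.cut1 (.hyp (Or.inl rfl))
          exact .mp (.ax1 _ _) hτB
        exact .mp (.mp (.mp (.ax6 A B _) h1) h2) (.hyp rfl)
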